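/- Let N ≥ 1 and let f : [0,1]^N → ℝ be a continuous, symmetric probability density function. For each positive integer k define the equispaced grid distribution T^k(f)(v) = k^N · ∫_{S(v)} f(u) du, where S(v) is the grid cell of side 1/k containing v. If T^k(f) is affiliated for every positive integer k, then f is affiliated. -/

import Mathlib

open MeasureTheory

/-- The equispaced grid cell of side `1/k` containing `v`:
`S(v) = ∏ₙ ((⌈k vₙ⌉ − 1)/k, ⌈k vₙ⌉/k]`. -/
def gridCell (N k : ℕ) (v : Fin N → ℝ) : Set (Fin N → ℝ) :=
  {u | ∀ n, ((⌈(k : ℝ) * v n⌉ : ℝ) - 1) / k < u n ∧ u n ≤ (⌈(k : ℝ) * v n⌉ : ℝ) / k}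

/-- The grid distribution `T^k(f)(v) = k^N ∫_{S(v)} f(u) du`. -/
noncomputable def gridT (N k : ℕ) (f : (Fin N → ℝ) → ℝ) (v : Fin N → ℝ) : ℝ :=
  (k : ℝ) ^ N * ∫ u in gridCell N k v, f u

/-- `f` is affiliated (MTP₂) on the set `s`: `f(x ∨ y) f(x ∧ y) ≥ f(x) f(y)` for `x, y ∈ s`,
where `⊔`/`⊓` are the componentwise max/min. -/
def AffiliatedOn {N : ℕ} (f : (Fin N → ℝ) → ℝ) (s : Set (Fin N → ℝ)) : Prop :=
  ∀ x ∈ s, ∀ y ∈ s, f (x ⊔ y) * f (x ⊓ y) ≥ f x * f y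

lemma gridCell_eq (N k : ℕ) (v : Fin N → ℝ) :
    gridCell N k v = Set.pi Set.univ fun n =>
      Set.Ioc (((⌈(k : ℝ) * v n⌉ : ℝ) - 1) / k) ((⌈(k : ℝ) * v n⌉ : ℝ) / k) := by
  ext u; simp [gridCell, Set.mem_pi]

lemma gridCell_measurable (N k : ℕ) (v : Fin N → ℝ) : MeasurableSet (gridCell N k v) := by
  rw [gridCell_eq]
  exact MeasurableSet.univ_pi fun n => measurableSet_Ioc

lemma volume_gridCell (N k : ℕ) (hk : 0 < k) (v : Fin N → ℝ) :
    volume (gridCell N k v) = ENNReal.ofReal ((1 / (k : ℝ)) ^ N) := by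
  rw [gridCell_eq, volume_pi_pi]
  have h : ∀ n : Fin N,
      volume (Set.Ioc (((⌈(k : ℝ) * v n⌉ : ℝ) - 1) / k) ((⌈(k : ℝ) * v n⌉ : ℝ) / k))
        = ENNReal.ofReal (1 / (k : ℝ)) := by
    intro n
    rw [Real.volume_Ioc]
    congr 1
    have hk' : (0:ℝ) < k := by exact_mod_cast hk
    field_simp
    ring
  rw [Finset.prod_congr rfl fun n _ => h n, Finset.prod_const, Finset.card_univ,
    Fintype.card_fin, ← ENNReal.ofReal_pow (by positivity)]

/-- The affine contraction toward the center `1/2`. -/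
noncomputable def sig (N : ℕ) (t : ℝ) (x : Fin N → ℝ) : Fin N → ℝ := fun n => (1 - t) * x n + t / 2

lemma sig_sup (N : ℕ) {t : ℝ} (ht : t ≤ 1) (x y : Fin N → ℝ) :
    sig N t x ⊔ sig N t y = sig N t (x ⊔ y) := by
  funext n
  simp only [Pi.sup_apply, sig]
  rw [max_add_add_right, mul_max_of_nonneg _ _ (by linarith : (0:ℝ) ≤ 1 - t)]

lemma sig_inf (N : ℕ) {t : ℝ} (ht : t ≤ 1) (x y : Fin N → ℝ) :
    sig N t x ⊓ sig N t y = sig N t (x ⊓ y) := by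
  funext n
  simp only [Pi.inf_apply, sig]
  rw [min_add_add_right, mul_min_of_nonneg _ _ (by linarith : (0:ℝ) ≤ 1 - t)]

lemma sig_mem (N : ℕ) {t : ℝ} (ht0 : 0 < t) (ht1 : t ≤ 1) {x : Fin N → ℝ}
    (hx : x ∈ Set.Icc (0 : Fin N → ℝ) 1) : ∀ n, sig N t x n ∈ Set.Ioo (0:ℝ) 1 := by
  intro n
  have h0 : 0 ≤ x n := hx.1 n
  have h1 : x n ≤ 1 := hx.2 n
  constructor
  · simp only [sig]; nlinarith
  · simp only [sig]; nlinarith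

/-- If `f` is a continuous, symmetric probability density on `[0,1]^N` and the
equispaced grid distribution `T^k(f)` is affiliated for every positive integer `k`, then `f`
is affiliated. -/
theorem affiliated_of_all_grid_affiliated (N : ℕ) (hN : 1 ≤ N)
    (f : (Fin N → ℝ) → ℝ)
    (hcont : ContinuousOn f (Set.Icc 0 1))
    (hnonneg : ∀ v ∈ Set.Icc (0 : Fin N → ℝ) 1, 0 ≤ f v)
    (hprob : ∫ v in Set.Icc (0 : Fin N → ℝ) 1, f v = 1)
    (hsymm : ∀ (φ : Equiv.Perm (Fin N)) (v : Fin N → ℝ), f (v ∘ φ) = f v)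
    (hgrid : ∀ k : ℕ, 0 < k → AffiliatedOn (gridT N k f) (Set.Icc 0 1)) :
    AffiliatedOn f (Set.Icc 0 1) := by
  classical
  have hne : (Finset.univ : Finset (Fin N)).Nonempty :=
    Finset.univ_nonempty_iff.mpr (Fin.pos_iff_nonempty.mp (by omega))
  have hInt : IntegrableOn f (Set.Icc (0 : Fin N → ℝ) 1) :=
    hcont.integrableOn_compact isCompact_Icc
  -- Key convergence: at interior points, gridT tends to f.
  have key : ∀ v : Fin N → ℝ, (∀ n, v n ∈ Set.Ioo (0:ℝ) 1) →
      Filter.Tendsto (fun k : ℕ => gridT N k f v) Filter.atTop (nhds (f v)) := by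
    intro v hv
    have hvIcc : v ∈ Set.Icc (0 : Fin N → ℝ) 1 :=
      ⟨fun n => (hv n).1.le, fun n => (hv n).2.le⟩
    rw [Metric.tendsto_atTop]
    intro ε hε
    obtain ⟨δ, hδ0, hδ⟩ := Metric.uniformContinuousOn_iff.mp
      (isCompact_Icc.uniformContinuousOn_of_continuous hcont) (ε/2) (by positivity)
    set m : ℝ := min δ (Finset.univ.inf' hne fun n => min (v n) (1 - v n)) with hm
    have hm0 : 0 < m := by
      apply lt_min hδ0
      rw [Finset.lt_inf'_iff]
      intro n _
      exact lt_min (hv n).1 (by linarith [(hv n).2])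
    obtain ⟨K, hK⟩ := exists_nat_gt (1 / m)
    refine ⟨max K 1, fun k hk => ?_⟩
    have hk1 : 1 ≤ k := le_trans (le_max_right _ _) hk
    have hkpos : (0:ℝ) < k := by exact_mod_cast hk1
    have hkm : 1 / (k:ℝ) < m := by
      have hKk : (1/m : ℝ) < k :=
        lt_of_lt_of_le hK (by exact_mod_cast le_trans (le_max_left _ _) hk)
      rw [div_lt_iff₀ hkpos]
      rw [div_lt_iff₀ hm0] at hKk
      nlinarith
    have hkδ : 1 / (k:ℝ) < δ := lt_of_lt_of_le hkm (min_le_left _ _)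
    have hkv : ∀ n, 1 / (k:ℝ) < min (v n) (1 - v n) := fun n =>
      lt_of_lt_of_le hkm (le_trans (min_le_right _ _) (Finset.inf'_le _ (Finset.mem_univ n)))
    -- bounds for points of the cell
    have hcell : ∀ u ∈ gridCell N k v, ∀ n,
        v n - 1/(k:ℝ) < u n ∧ u n ≤ v n + 1/(k:ℝ) := by
      intro u hu n
      obtain ⟨h1, h2⟩ := hu n
      have hle : (k:ℝ) * v n ≤ (⌈(k:ℝ) * v n⌉ : ℝ) := Int.le_ceil _
      have hlt : (⌈(k:ℝ) * v n⌉ : ℝ) < (k:ℝ) * v n + 1 := Int.ceil_lt_add_one _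
      have h1' : (⌈(k:ℝ) * v n⌉ : ℝ) - 1 < u n * k := (div_lt_iff₀ hkpos).mp h1
      have h2' : u n * k ≤ (⌈(k:ℝ) * v n⌉ : ℝ) := (le_div_iff₀ hkpos).mp h2
      constructor
      · have heq : v n - 1/(k:ℝ) = ((k:ℝ) * v n - 1) / k := by field_simp
        rw [heq, div_lt_iff₀ hkpos]
        rw [mul_comm]
        linarith
      · have heq : v n + 1/(k:ℝ) = ((k:ℝ) * v n + 1) / k := by field_simp
        rw [heq, le_div_iff₀ hkpos]
        linarith
    -- the cell is inside the unit cube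
    have hsub : gridCell N k v ⊆ Set.Icc (0 : Fin N → ℝ) 1 := by
      intro u hu
      constructor
      · intro n
        have := (hcell u hu n).1
        have := (hkv n).trans_le (min_le_left _ _)
        simp only [Pi.zero_apply]
        linarith
      · intro n
        have := (hcell u hu n).2
        have := (hkv n).trans_le (min_le_right _ _)
        simp only [Pi.one_apply]
        linarith
    -- points of the cell are close to v
    have hdist : ∀ u ∈ gridCell N k v, dist u v ≤ 1/(k:ℝ) := by
      intro u hu
      refine dist_pi_le_iff (by positivity) |>.mpr fun n => ?_
      rw [Real.dist_eq, abs_sub_le_iff]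
      have := hcell u hu n
      constructor <;> linarith [this.1, this.2]
    have hbound : ∀ u ∈ gridCell N k v, ‖f u - f v‖ ≤ ε/2 := by
      intro u hu
      have : dist (f u) (f v) < ε/2 :=
        hδ u (hsub hu) v hvIcc (lt_of_le_of_lt (hdist u hu) hkδ)
      rw [Real.dist_eq] at this
      exact this.le
    have hk0 : 0 < k := hk1
    have hvol : volume (gridCell N k v) = ENNReal.ofReal ((1/(k:ℝ))^N) :=
      volume_gridCell N k hk0 v
    have hvolT : (volume (gridCell N k v)).toReal = (1/(k:ℝ))^N := by
      rw [hvol, ENNReal.toReal_ofReal (by positivity)]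
    have hvolfin : volume (gridCell N k v) < ⊤ := by
      rw [hvol]; exact ENNReal.ofReal_lt_top
    have hintcell : IntegrableOn f (gridCell N k v) := hInt.mono_set hsub
    have hsplit : ∫ u in gridCell N k v, (f u - f v)
        = (∫ u in gridCell N k v, f u) - (1/(k:ℝ))^N * f v := by
      rw [integral_sub hintcell (integrableOn_const hvolfin.ne),
        setIntegral_const, measureReal_def, hvolT, smul_eq_mul]
    have hnorm : ‖∫ u in gridCell N k v, (f u - f v)‖ ≤ ε/2 * (1/(k:ℝ))^N := by
      have := norm_setIntegral_le_of_norm_le_const hvolfin hbound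
      rwa [measureReal_def, hvolT] at this
    have hkpow : (k:ℝ)^N * (1/(k:ℝ))^N = 1 := by
      rw [← mul_pow]; field_simp; exact one_pow N
    have habs : |(∫ u in gridCell N k v, f u) - (1/(k:ℝ))^N * f v| ≤ ε/2 * (1/(k:ℝ))^N := by
      rw [← hsplit]; exact hnorm
    have hfinal : dist (gridT N k f v) (f v) ≤ ε/2 := by
      rw [Real.dist_eq, gridT]
      have h1 : (k:ℝ)^N * (∫ u in gridCell N k v, f u) - f v
          = (k:ℝ)^N * ((∫ u in gridCell N k v, f u) - (1/(k:ℝ))^N * f v) := by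
        rw [mul_sub, ← mul_assoc, hkpow, one_mul]
      rw [h1, abs_mul, abs_of_nonneg (by positivity : (0:ℝ) ≤ (k:ℝ)^N)]
      calc (k:ℝ)^N * |(∫ u in gridCell N k v, f u) - (1/(k:ℝ))^N * f v|
          ≤ (k:ℝ)^N * (ε/2 * (1/(k:ℝ))^N) := by
            apply mul_le_mul_of_nonneg_left habs (by positivity)
        _ = ε/2 := by rw [← mul_assoc, mul_comm ((k:ℝ)^N) (ε/2), mul_assoc, hkpow, mul_one]
    linarith [hfinal]
  -- Interior case of the inequality
  have hIoo : ∀ x y : Fin N → ℝ, (∀ n, x n ∈ Set.Ioo (0:ℝ) 1) →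
      (∀ n, y n ∈ Set.Ioo (0:ℝ) 1) → f x * f y ≤ f (x ⊔ y) * f (x ⊓ y) := by
    intro x y hx hy
    have hxIcc : x ∈ Set.Icc (0 : Fin N → ℝ) 1 := ⟨fun n => (hx n).1.le, fun n => (hx n).2.le⟩
    have hyIcc : y ∈ Set.Icc (0 : Fin N → ℝ) 1 := ⟨fun n => (hy n).1.le, fun n => (hy n).2.le⟩
    have hsupIoo : ∀ n, (x ⊔ y) n ∈ Set.Ioo (0:ℝ) 1 := by
      intro n
      simp only [Pi.sup_apply]
      exact ⟨lt_max_of_lt_left (hx n).1, max_lt (hx n).2 (hy n).2⟩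
    have hinfIoo : ∀ n, (x ⊓ y) n ∈ Set.Ioo (0:ℝ) 1 := by
      intro n
      simp only [Pi.inf_apply]
      exact ⟨lt_min (hx n).1 (hy n).1, min_lt_of_left_lt (hx n).2⟩
    have h1 := (key x hx).mul (key y hy)
    have h2 := (key _ hsupIoo).mul (key _ hinfIoo)
    refine le_of_tendsto_of_tendsto h1 h2 ?_
    filter_upwards [Filter.eventually_ge_atTop 1] with k hk
    exact hgrid k hk x hxIcc y hyIcc
  -- Extend to the closed cube via the contraction sig
  intro x hx y hy
  have hseq : ∀ z : Fin N → ℝ, z ∈ Set.Icc (0 : Fin N → ℝ) 1 →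
      Filter.Tendsto (fun j : ℕ => f (sig N (1/(j+1 : ℝ)) z)) Filter.atTop (nhds (f z)) := by
    intro z hz
    have htend : Filter.Tendsto (fun j : ℕ => sig N (1/(j+1 : ℝ)) z) Filter.atTop (nhds z) := by
      rw [tendsto_pi_nhds]
      intro n
      have h0 : Filter.Tendsto (fun j : ℕ => 1/((j:ℝ)+1)) Filter.atTop (nhds 0) :=
        tendsto_one_div_add_atTop_nhds_zero_nat
      have : Filter.Tendsto (fun j : ℕ => (1 - 1/((j:ℝ)+1)) * z n + (1/((j:ℝ)+1))/2)
          Filter.atTop (nhds ((1 - 0) * z n + 0/2)) := by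
        apply Filter.Tendsto.add
        · exact (Filter.Tendsto.sub tendsto_const_nhds h0).mul tendsto_const_nhds
        · exact h0.div_const 2
      simpa [sig] using this
    have hmem : ∀ j : ℕ, sig N (1/(j+1 : ℝ)) z ∈ Set.Icc (0 : Fin N → ℝ) 1 := by
      intro j
      have := sig_mem N (t := 1/(j+1:ℝ)) (by positivity)
        (by rw [div_le_one (by positivity)]; linarith [Nat.cast_nonneg (α := ℝ) j]) hz
      exact ⟨fun n => (this n).1.le, fun n => (this n).2.le⟩
    exact (hcont z hz).tendsto.comp
      (tendsto_nhdsWithin_of_tendsto_nhds_of_eventually_within _ htend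
        (Filter.Eventually.of_forall hmem))
  have hineq : ∀ j : ℕ, f (sig N (1/(j+1:ℝ)) x) * f (sig N (1/(j+1:ℝ)) y)
      ≤ f (sig N (1/(j+1:ℝ)) (x ⊔ y)) * f (sig N (1/(j+1:ℝ)) (x ⊓ y)) := by
    intro j
    have ht0 : (0:ℝ) < 1/(j+1:ℝ) := by positivity
    have ht1 : (1:ℝ)/(j+1:ℝ) ≤ 1 := by
      rw [div_le_one (by positivity)]; linarith [Nat.cast_nonneg (α := ℝ) j]
    have := hIoo (sig N (1/(j+1:ℝ)) x) (sig N (1/(j+1:ℝ)) y)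
      (sig_mem N ht0 ht1 hx) (sig_mem N ht0 ht1 hy)
    rwa [sig_sup N ht1, sig_inf N ht1] at this
  have hxy : x ⊔ y ∈ Set.Icc (0 : Fin N → ℝ) 1 :=
    ⟨le_sup_of_le_left hx.1, sup_le hx.2 hy.2⟩
  have hxy' : x ⊓ y ∈ Set.Icc (0 : Fin N → ℝ) 1 :=
    ⟨le_inf hx.1 hy.1, inf_le_of_left_le hx.2⟩
  exact le_of_tendsto_of_tendsto ((hseq x hx).mul (hseq y hy))
    ((hseq _ hxy).mul (hseq _ hxy')) (Filter.Eventually.of_forall hineq)
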